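/- Let p > 2, a > 0 and b ≥ 0, and let f(s,t) = (a/p)(|s|^p + 2b|s|^{p/2}|t|^{p/2} + |t|^p). Then for all real s, t with s ≠ 0 and t ≠ 0, the determinant of the Hessian matrix of f at (s,t) equals a²(p−1)[ (p − 1 − b²) |s|^{p/2}|t|^{p/2} + (b/2)(p−2)( |s|^p + |t|^p ) ] |s|^{p/2−2}|t|^{p/2−2}. -/

import Mathlib

open Real Filter

lemma aux_absRpow (r x : ℝ) (hx : x ≠ 0) :
    HasDerivAt (fun x : ℝ => |x| ^ r) (r * |x| ^ (r - 2) * x) x := by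
  rcases hx.lt_or_gt with h | h
  · have hne : -x ≠ 0 := neg_ne_zero.2 hx
    have hpos : (0:ℝ) < -x := by linarith
    have h1 : HasDerivAt (fun y : ℝ => (-y) ^ r) (r * (-x) ^ (r - 1) * (-1)) x :=
      (Real.hasDerivAt_rpow_const (Or.inl hne)).comp x (hasDerivAt_neg x)
    have heq : (fun y : ℝ => |y| ^ r) =ᶠ[nhds x] (fun y : ℝ => (-y) ^ r) := by
      filter_upwards [Iio_mem_nhds h] with y hy
      rw [abs_of_neg hy]
    have h2 := h1.congr_of_eventuallyEq heq
    refine h2.congr_deriv (Eq.symm ?_)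
    rw [abs_of_neg h, show r - 1 = (r - 2) + 1 by ring, Real.rpow_add hpos, Real.rpow_one]
    ring
  · have h1 : HasDerivAt (fun y : ℝ => y ^ r) (r * x ^ (r - 1)) x :=
      Real.hasDerivAt_rpow_const (Or.inl hx)
    have heq : (fun y : ℝ => |y| ^ r) =ᶠ[nhds x] (fun y : ℝ => y ^ r) := by
      filter_upwards [Ioi_mem_nhds h] with y hy
      rw [abs_of_pos hy]
    have h2 := h1.congr_of_eventuallyEq heq
    refine h2.congr_deriv (Eq.symm ?_)
    rw [abs_of_pos h, show r - 1 = (r - 2) + 1 by ring, Real.rpow_add h, Real.rpow_one]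
    ring

lemma aux_absRpowMul (r x : ℝ) (hx : x ≠ 0) :
    HasDerivAt (fun x : ℝ => |x| ^ r * x) ((r + 1) * |x| ^ r) x := by
  have h := (aux_absRpow r x hx).mul (hasDerivAt_id x)
  refine h.congr_deriv (Eq.symm ?_)
  have hax : (0:ℝ) < |x| := abs_pos.2 hx
  have h2 : |x| ^ (2:ℝ) = x * x := by
    rw [show (2:ℝ) = ((2:ℕ):ℝ) by norm_num, Real.rpow_natCast, sq_abs]; ring
  have hsq : |x| ^ r = |x| ^ (r - 2) * (x * x) := by
    rw [← h2, ← Real.rpow_add hax]; ring_nf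
  calc (r + 1) * |x| ^ r = r * (|x| ^ (r-2) * (x*x)) + |x| ^ r := by rw [← hsq]; ring
  _ = r * |x| ^ (r - 2) * x * id x + |x| ^ r * 1 := by simp [id]; ring

lemma aux_split2 (x c d e : ℝ) (hx : x ≠ 0) (h : c = d + e) : |x| ^ c = |x| ^ d * |x| ^ e := by
  rw [h, Real.rpow_add (abs_pos.2 hx)]

lemma aux_split (x c d : ℝ) (hx : x ≠ 0) (h : c = d + 2) : |x| ^ c = |x| ^ d * (x * x) := by
  rw [aux_split2 x c d 2 hx h, show (2:ℝ) = ((2:ℕ):ℝ) by norm_num, Real.rpow_natCast, sq_abs]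
  ring

noncomputable def Gfun (p a b : ℝ) (q : ℝ × ℝ) : ℝ × ℝ →L[ℝ] ℝ :=
  (a * (|q.1| ^ (p-2) * q.1 + b * (|q.1| ^ (p/2-2) * q.1 * |q.2| ^ (p/2)))) •
      ContinuousLinearMap.fst ℝ ℝ ℝ
  + (a * (|q.2| ^ (p-2) * q.2 + b * (|q.1| ^ (p/2) * (|q.2| ^ (p/2-2) * q.2)))) •
      ContinuousLinearMap.snd ℝ ℝ ℝ

lemma aux_hasFDeriv (p a b : ℝ) (hp : 2 < p)
    (f : ℝ × ℝ → ℝ)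
    (hf : ∀ q : ℝ × ℝ,
      f q = (a / p) * (|q.1| ^ p + 2 * b * |q.1| ^ (p / 2) * |q.2| ^ (p / 2) + |q.2| ^ p))
    (q : ℝ × ℝ) (h1 : q.1 ≠ 0) (h2 : q.2 ≠ 0) :
    HasFDerivAt f (Gfun p a b q) q := by
  have hpne : p ≠ 0 := by linarith
  have hA := (aux_absRpow p q.1 h1).comp_hasFDerivAt q (hasFDerivAt_fst : HasFDerivAt Prod.fst (ContinuousLinearMap.fst ℝ ℝ ℝ) q)
  have hB := (aux_absRpow (p/2) q.1 h1).comp_hasFDerivAt q (hasFDerivAt_fst : HasFDerivAt Prod.fst (ContinuousLinearMap.fst ℝ ℝ ℝ) q)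
  have hC := (aux_absRpow (p/2) q.2 h2).comp_hasFDerivAt q (hasFDerivAt_snd : HasFDerivAt Prod.snd (ContinuousLinearMap.snd ℝ ℝ ℝ) q)
  have hD := (aux_absRpow p q.2 h2).comp_hasFDerivAt q (hasFDerivAt_snd : HasFDerivAt Prod.snd (ContinuousLinearMap.snd ℝ ℝ ℝ) q)
  have htot := ((hA.add ((hB.mul hC).const_mul (2*b))).add hD).const_mul (a/p)
  have hfeq : f = fun q : ℝ × ℝ =>
      (a/p) * ((|q.1| ^ p + 2*b * (|q.1| ^ (p/2) * |q.2| ^ (p/2))) + |q.2| ^ p) := by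
    funext q; rw [hf q]; ring
  rw [hfeq]
  refine htot.congr_fderiv (Eq.symm ?_)
  refine ContinuousLinearMap.ext fun v => ?_
  simp only [Gfun, ContinuousLinearMap.add_apply, ContinuousLinearMap.smul_apply,
    ContinuousLinearMap.coe_fst', ContinuousLinearMap.coe_snd', smul_eq_mul,
    Function.comp_apply]
  field_simp
  ring

theorem stmt_17 (p a b : ℝ) (hp : 2 < p) (ha : 0 < a) (hb : 0 ≤ b)
    (f : ℝ × ℝ → ℝ)
    (hf : ∀ q : ℝ × ℝ,
      f q = (a / p) * (|q.1| ^ p + 2 * b * |q.1| ^ (p / 2) * |q.2| ^ (p / 2) + |q.2| ^ p))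
    (s t : ℝ) (hs : s ≠ 0) (ht : t ≠ 0) :
    fderiv ℝ (fderiv ℝ f) (s, t) (1, 0) (1, 0) * fderiv ℝ (fderiv ℝ f) (s, t) (0, 1) (0, 1) -
        fderiv ℝ (fderiv ℝ f) (s, t) (1, 0) (0, 1) * fderiv ℝ (fderiv ℝ f) (s, t) (0, 1) (1, 0) =
      a ^ 2 * (p - 1) *
        ((p - 1 - b ^ 2) * |s| ^ (p / 2) * |t| ^ (p / 2) +
          (b / 2) * (p - 2) * (|s| ^ p + |t| ^ p)) *
        (|s| ^ (p / 2 - 2) * |t| ^ (p / 2 - 2)) := by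
  have hU : {q : ℝ × ℝ | q.1 ≠ 0 ∧ q.2 ≠ 0} ∈ nhds (s, t) := by
    refine IsOpen.mem_nhds ?_ ⟨hs, ht⟩
    exact (isOpen_compl_singleton.preimage continuous_fst).inter
      (isOpen_compl_singleton.preimage continuous_snd)
  have hev : fderiv ℝ f =ᶠ[nhds (s, t)] Gfun p a b := by
    filter_upwards [hU] with q hq
    exact (aux_hasFDeriv p a b hp f hf q hq.1 hq.2).fderiv
  have h2nd : fderiv ℝ (fderiv ℝ f) (s, t) = fderiv ℝ (Gfun p a b) (s, t) := hev.fderiv_eq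
  -- derivative of Gfun
  have hg1 := (aux_absRpowMul (p-2) s hs).comp_hasFDerivAt (s, t) (hasFDerivAt_fst : HasFDerivAt Prod.fst (ContinuousLinearMap.fst ℝ ℝ ℝ) (s,t))
  have hg2 := (aux_absRpowMul (p/2-2) s hs).comp_hasFDerivAt (s, t) (hasFDerivAt_fst : HasFDerivAt Prod.fst (ContinuousLinearMap.fst ℝ ℝ ℝ) (s,t))
  have hh := (aux_absRpow (p/2) t ht).comp_hasFDerivAt (s, t) (hasFDerivAt_snd : HasFDerivAt Prod.snd (ContinuousLinearMap.snd ℝ ℝ ℝ) (s,t))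
  have hg1' := (aux_absRpowMul (p-2) t ht).comp_hasFDerivAt (s, t) (hasFDerivAt_snd : HasFDerivAt Prod.snd (ContinuousLinearMap.snd ℝ ℝ ℝ) (s,t))
  have hg2' := (aux_absRpowMul (p/2-2) t ht).comp_hasFDerivAt (s, t) (hasFDerivAt_snd : HasFDerivAt Prod.snd (ContinuousLinearMap.snd ℝ ℝ ℝ) (s,t))
  have hh' := (aux_absRpow (p/2) s hs).comp_hasFDerivAt (s, t) (hasFDerivAt_fst : HasFDerivAt Prod.fst (ContinuousLinearMap.fst ℝ ℝ ℝ) (s,t))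
  simp only [Function.comp_def] at hg1 hg2 hh hg1' hg2' hh'
  have hF1 := (hg1.add ((hg2.mul hh).const_mul b)).const_mul a
  have hF2 := (hg1'.add ((hh'.mul hg2').const_mul b)).const_mul a
  have hS1 := hF1.smul (hasFDerivAt_const (ContinuousLinearMap.fst ℝ ℝ ℝ) (s, t))
  have hS2 := hF2.smul (hasFDerivAt_const (ContinuousLinearMap.snd ℝ ℝ ℝ) (s, t))
  have h3 : fderiv ℝ (Gfun p a b) (s, t) = _ := (hS1.add hS2).fderiv
  rw [h2nd, h3]
  simp only [ContinuousLinearMap.add_apply, ContinuousLinearMap.smul_apply,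
    ContinuousLinearMap.smulRight_apply, ContinuousLinearMap.coe_fst',
    ContinuousLinearMap.coe_snd', ContinuousLinearMap.zero_apply, smul_eq_mul,
    Function.comp_apply, smul_zero, zero_add, add_zero, mul_zero, mul_one, zero_mul, one_mul]
  have es1 : |s| ^ (p - 2) = |s| ^ (p/2-2) * |s| ^ (p/2) := aux_split2 s _ _ _ hs (by ring)
  have es3 : |s| ^ p = |s| ^ (p/2) * |s| ^ (p/2) := aux_split2 s _ _ _ hs (by ring)
  have es2 : |s| ^ (p/2) = |s| ^ (p/2-2) * (s*s) := aux_split s _ _ hs (by ring)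
  have et1 : |t| ^ (p - 2) = |t| ^ (p/2-2) * |t| ^ (p/2) := aux_split2 t _ _ _ ht (by ring)
  have et3 : |t| ^ p = |t| ^ (p/2) * |t| ^ (p/2) := aux_split2 t _ _ _ ht (by ring)
  have et2 : |t| ^ (p/2) = |t| ^ (p/2-2) * (t*t) := aux_split t _ _ ht (by ring)
  rw [es1, es3, et1, et3, es2, et2]
  ring
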